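/- arXiv:2112.09247 — 2 statements merged into one kernel-verified Lean document; each statement's English description precedes it below -/
import Mathlib

section
/- Let Ω ⊆ ℝⁿ be a bounded open set and let Λ ≥ 0. Suppose (p_k) is a sequence of reals with p_k > 4 and p_k → ∞, and for each k, λ_k > 0 and u_k : closure(Ω) → ℝ is a continuous viscosity solution of −Δ_{p_k} u = λ_k e^{u} in Ω with u_k = 0 on ∂Ω. Assume λ_k^{1/p_k}/p_k → Λ as k → ∞ and that u_k/p_k converges uniformly on closure(Ω) to a function u. Then u is a continuous viscosity solution of min{|∇u| − Λ e^{u}, −Δ_∞ u} = 0 in Ω with u = 0 on ∂Ω. -/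
open Real Set Metric Filter Topology

/-- `⟨D²φ(x)∇φ(x), ∇φ(x)⟩`, i.e. `Δ_∞φ(x)`. -/
noncomputable def hessQ {n : ℕ} (φ : EuclideanSpace ℝ (Fin n) → ℝ)
    (x : EuclideanSpace ℝ (Fin n)) : ℝ :=
  iteratedFDeriv ℝ 2 φ x ![gradient φ x, gradient φ x]

/-- Viscosity supersolution of `min{|∇u| − Λ e^u, −Δ_∞ u} = 0` in `Ω`. -/
def IsInftySuper {n : ℕ} (Ω : Set (EuclideanSpace ℝ (Fin n))) (Λ : ℝ)
    (u : EuclideanSpace ℝ (Fin n) → ℝ) : Prop :=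
  ∀ x₀ ∈ Ω, ∀ φ : EuclideanSpace ℝ (Fin n) → ℝ, ContDiff ℝ 2 φ →
    IsLocalMinOn (fun x => u x - φ x) Ω x₀ →
    (0 ≤ ‖gradient φ x₀‖ - Λ * Real.exp (u x₀) ∧ 0 ≤ -(hessQ φ x₀))

/-- Viscosity subsolution of `min{|∇u| − Λ e^u, −Δ_∞ u} = 0` in `Ω`. -/
def IsInftySub {n : ℕ} (Ω : Set (EuclideanSpace ℝ (Fin n))) (Λ : ℝ)
    (u : EuclideanSpace ℝ (Fin n) → ℝ) : Prop :=
  ∀ x₀ ∈ Ω, ∀ φ : EuclideanSpace ℝ (Fin n) → ℝ, ContDiff ℝ 2 φ →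
    IsLocalMaxOn (fun x => u x - φ x) Ω x₀ →
    min (‖gradient φ x₀‖ - Λ * Real.exp (u x₀)) (-(hessQ φ x₀)) ≤ 0

/-- Viscosity solution of `min{|∇u| − Λ e^u, −Δ_∞ u} = 0` in `Ω`. -/
def IsInftySol {n : ℕ} (Ω : Set (EuclideanSpace ℝ (Fin n))) (Λ : ℝ)
    (u : EuclideanSpace ℝ (Fin n) → ℝ) : Prop :=
  IsInftySuper Ω Λ u ∧ IsInftySub Ω Λ u

/-- The Laplacian `Δφ(x)`, as the trace of the Hessian. -/
noncomputable def lapl {n : ℕ} (φ : EuclideanSpace ℝ (Fin n) → ℝ)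
    (x : EuclideanSpace ℝ (Fin n)) : ℝ :=
  ∑ i : Fin n, iteratedFDeriv ℝ 2 φ x ![EuclideanSpace.single i 1, EuclideanSpace.single i 1]

/-- Viscosity supersolution of `−Δ_p u = λ e^u` in `Ω` (expanded form, for `p > 4`). -/
def IsPSuper {n : ℕ} (Ω : Set (EuclideanSpace ℝ (Fin n))) (p lam : ℝ)
    (u : EuclideanSpace ℝ (Fin n) → ℝ) : Prop :=
  ∀ x₀ ∈ Ω, ∀ φ : EuclideanSpace ℝ (Fin n) → ℝ, ContDiff ℝ 2 φ →
    IsLocalMinOn (fun x => u x - φ x) Ω x₀ →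
    lam * Real.exp (u x₀) ≤
      -(‖gradient φ x₀‖ ^ (p - 4) *
        (‖gradient φ x₀‖ ^ 2 * lapl φ x₀ + (p - 2) * hessQ φ x₀))

/-- Viscosity subsolution of `−Δ_p u = λ e^u` in `Ω` (expanded form, for `p > 4`). -/
def IsPSub {n : ℕ} (Ω : Set (EuclideanSpace ℝ (Fin n))) (p lam : ℝ)
    (u : EuclideanSpace ℝ (Fin n) → ℝ) : Prop :=
  ∀ x₀ ∈ Ω, ∀ φ : EuclideanSpace ℝ (Fin n) → ℝ, ContDiff ℝ 2 φ →
    IsLocalMaxOn (fun x => u x - φ x) Ω x₀ →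
    -(‖gradient φ x₀‖ ^ (p - 4) *
        (‖gradient φ x₀‖ ^ 2 * lapl φ x₀ + (p - 2) * hessQ φ x₀)) ≤
      lam * Real.exp (u x₀)

/-- Viscosity solution of `−Δ_p u = λ e^u` in `Ω`. -/
def IsPSol {n : ℕ} (Ω : Set (EuclideanSpace ℝ (Fin n))) (p lam : ℝ)
    (u : EuclideanSpace ℝ (Fin n) → ℝ) : Prop :=
  IsPSuper Ω p lam u ∧ IsPSub Ω p lam u

section GLAux

variable {n : ℕ}
local notation "E" => EuclideanSpace ℝ (Fin n)
local notation "⟪" x ", " y "⟫" => @inner ℝ _ _ x y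

/-! ### Linearity / scaling of `gradient`, `hessQ`, `lapl` -/

lemma GL.grad_smul (c : ℝ) {f : E → ℝ} {x : E} (hf : DifferentiableAt ℝ f x) :
    gradient (fun y => c * f y) x = c • gradient f x := by
  unfold gradient
  rw [show (fun y => c * f y) = (fun y => c • f y) from rfl, fderiv_fun_const_smul hf c, map_smul]

lemma GL.grad_add {f g : E → ℝ} {x : E} (hf : DifferentiableAt ℝ f x)
    (hg : DifferentiableAt ℝ g x) :
    gradient (fun y => f y + g y) x = gradient f x + gradient g x := by
  unfold gradient
  rw [fderiv_fun_add hf hg, map_add]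

lemma GL.pair_smul (c : ℝ) (v : E) : ![c • v, c • v] = fun i => c • (![v, v] i) := by
  funext i; fin_cases i <;> rfl

lemma GL.iter2_smul (c : ℝ) {f : E → ℝ} (hf : ContDiff ℝ 2 f) (x : E) (m : Fin 2 → E) :
    iteratedFDeriv ℝ 2 (fun y => c * f y) x m = c * iteratedFDeriv ℝ 2 f x m := by
  rw [show (fun y => c * f y) = c • f from rfl, iteratedFDeriv_const_smul_apply hf.contDiffAt]
  rfl

lemma GL.iter2_add {f g : E → ℝ} (hf : ContDiff ℝ 2 f) (hg : ContDiff ℝ 2 g) (x : E)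
    (m : Fin 2 → E) :
    iteratedFDeriv ℝ 2 (fun y => f y + g y) x m =
      iteratedFDeriv ℝ 2 f x m + iteratedFDeriv ℝ 2 g x m := by
  have := iteratedFDeriv_add_apply (i := 2) (x := x) hf.contDiffAt hg.contDiffAt
  have h2 : (fun y => f y + g y) = f + g := rfl
  rw [h2, this]
  rfl

lemma GL.hessQ_smul (c : ℝ) {f : E → ℝ} (hf : ContDiff ℝ 2 f) (x : E) :
    hessQ (fun y => c * f y) x = c ^ 3 * hessQ f x := by
  unfold hessQ
  rw [GL.grad_smul c (hf.differentiable two_ne_zero |>.differentiableAt),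
    GL.iter2_smul c hf, GL.pair_smul, ContinuousMultilinearMap.map_smul_univ]
  simp [smul_eq_mul]; ring

lemma GL.lapl_smul (c : ℝ) {f : E → ℝ} (hf : ContDiff ℝ 2 f) (x : E) :
    lapl (fun y => c * f y) x = c * lapl f x := by
  unfold lapl
  rw [Finset.mul_sum]
  exact Finset.sum_congr rfl fun i _ => GL.iter2_smul c hf x _

/-! ### The quadratic `qd x₀` -/

noncomputable def qd (x₀ : E) : E → ℝ := fun x => ⟪x - x₀, x - x₀⟫

noncomputable def isl {n : ℕ} : EuclideanSpace ℝ (Fin n) →L[ℝ]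
    EuclideanSpace ℝ (Fin n) →L[ℝ] ℝ := innerSL ℝ

lemma GL.qd_contDiff (x₀ : E) : ContDiff ℝ 2 (qd x₀) :=
  (contDiff_id.sub contDiff_const).inner ℝ (contDiff_id.sub contDiff_const)

lemma GL.qd_eq (x₀ x : E) : qd x₀ x = ‖x - x₀‖ ^ 2 := real_inner_self_eq_norm_sq _

lemma GL.qd_fderiv (x₀ x : E) :
    fderiv ℝ (qd x₀) x = (2 : ℝ) • (isl (x - x₀)) := by
  ext y
  rw [show qd x₀ = fun x => ⟪(fun z => z - x₀) x, (fun z => z - x₀) x⟫ from rfl,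
    fderiv_inner_apply ℝ (differentiableAt_fun_id.sub_const x₀)
      (differentiableAt_fun_id.sub_const x₀)]
  have : fderiv ℝ (fun z : E => z - x₀) x = ContinuousLinearMap.id ℝ (EuclideanSpace ℝ (Fin n)) :=
    ((hasFDerivAt_id x).sub_const x₀).fderiv
  rw [this]
  simp only [ContinuousLinearMap.id_apply, ContinuousLinearMap.smul_apply, isl, innerSL_apply_apply,
    smul_eq_mul]
  rw [innerSL_apply_apply, real_inner_comm y]
  ring

lemma GL.qd_grad_zero (x₀ : E) : gradient (qd x₀) x₀ = 0 := by
  unfold gradient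
  have : fderiv ℝ (qd x₀) x₀ = 0 := by
    rw [GL.qd_fderiv]; ext y; simp [isl]
  rw [this, map_zero]

lemma GL.qd_iter2 (x₀ x : E) (m : Fin 2 → E) :
    iteratedFDeriv ℝ 2 (qd x₀) x m = 2 * ⟪m 0, m 1⟫ := by
  rw [iteratedFDeriv_two_apply]
  have hfd : fderiv ℝ (qd x₀) = fun y => ((2 : ℝ) • (isl (n := n))) (y - x₀) := by
    funext y; rw [GL.qd_fderiv]; simp
  have hfd2 : (fun y => ((2 : ℝ) • (isl (n := n))) (y - x₀))
      = fun y : E => ((2 : ℝ) • (isl (n := n))) y - ((2 : ℝ) • (isl (n := n))) x₀ := by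
    funext y; rw [map_sub]
  rw [hfd, hfd2,
    ((((2 : ℝ) • (isl (n := n))).hasFDerivAt (x := x)).sub_const _).fderiv]
  simp [isl]
  rfl

/-! ### Continuity -/

lemma GL.grad_cont {φ : E → ℝ} (hφ : ContDiff ℝ 2 φ) : Continuous (gradient φ) := by
  unfold gradient
  exact (LinearIsometryEquiv.continuous _).comp (hφ.continuous_fderiv two_ne_zero)

lemma GL.iter2_cont {φ : E → ℝ} (hφ : ContDiff ℝ 2 φ) :
    Continuous (iteratedFDeriv ℝ 2 φ) := hφ.continuous_iteratedFDeriv le_rfl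

lemma GL.hessQ_cont {φ : E → ℝ} (hφ : ContDiff ℝ 2 φ) : Continuous (hessQ φ) := by
  have h1 : Continuous fun x : E =>
      ((iteratedFDeriv ℝ 2 φ x, ![gradient φ x, gradient φ x]) :
        (ContinuousMultilinearMap ℝ (fun _ : Fin 2 => E) ℝ) × (Fin 2 → E)) := by
    refine (GL.iter2_cont hφ).prodMk (continuous_pi fun i => ?_)
    fin_cases i <;> exact GL.grad_cont hφ
  exact continuous_eval.comp h1

lemma GL.lapl_cont {φ : E → ℝ} (hφ : ContDiff ℝ 2 φ) : Continuous (lapl φ) := by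
  refine continuous_finset_sum _ fun i _ => ?_
  exact continuous_eval.comp ((GL.iter2_cont hφ).prodMk continuous_const)

/-! ### Perturbed test function `φ + c • qd x₀` -/

lemma GL.phit_contDiff {φ : E → ℝ} (hφ : ContDiff ℝ 2 φ) (c : ℝ) (x₀ : E) :
    ContDiff ℝ 2 (fun x => φ x + c * qd x₀ x) :=
  hφ.add (contDiff_const.mul (GL.qd_contDiff x₀))

lemma GL.phit_grad {φ : E → ℝ} (hφ : ContDiff ℝ 2 φ) (c : ℝ) (x₀ : E) :
    gradient (fun x => φ x + c * qd x₀ x) x₀ = gradient φ x₀ := by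
  rw [GL.grad_add (hφ.differentiable two_ne_zero |>.differentiableAt)
      (((GL.qd_contDiff x₀).differentiable two_ne_zero |>.differentiableAt).const_mul c),
    GL.grad_smul c ((GL.qd_contDiff x₀).differentiable two_ne_zero |>.differentiableAt),
    GL.qd_grad_zero, smul_zero, add_zero]

lemma GL.phit_hessQ {φ : E → ℝ} (hφ : ContDiff ℝ 2 φ) (c : ℝ) (x₀ : E) :
    hessQ (fun x => φ x + c * qd x₀ x) x₀ =
      hessQ φ x₀ + 2 * c * ‖gradient φ x₀‖ ^ 2 := by
  unfold hessQ
  rw [GL.phit_grad hφ c x₀,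
    GL.iter2_add hφ (contDiff_const.mul (GL.qd_contDiff x₀)) x₀,
    GL.iter2_smul c (GL.qd_contDiff x₀), GL.qd_iter2]
  have : ⟪(![gradient φ x₀, gradient φ x₀] : Fin 2 → E) 0,
      (![gradient φ x₀, gradient φ x₀] : Fin 2 → E) 1⟫ = ‖gradient φ x₀‖ ^ 2 := by
    show ⟪gradient φ x₀, gradient φ x₀⟫ = _
    exact real_inner_self_eq_norm_sq _
  rw [this]; ring

/-! ### Limit helpers -/

lemma GL.rpow_lim {C : ℝ} (hC : 0 < C) {a : ℕ → ℝ} {l : ℝ} (ha : Tendsto a atTop (𝓝 l)) :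
    Tendsto (fun k => C ^ a k) atTop (𝓝 (C ^ l)) := by
  have h1 : (fun k => C ^ a k) = fun k => Real.exp (Real.log C * a k) := by
    funext k; rw [rpow_def_of_pos hC]
  have h2 : C ^ l = Real.exp (Real.log C * l) := by rw [rpow_def_of_pos hC]
  rw [h1, h2]
  exact (Real.continuous_exp.tendsto _).comp (ha.const_mul _)

lemma GL.inv_p {p : ℕ → ℝ} (hp : Tendsto p atTop atTop) :
    Tendsto (fun k => 1 / p k) atTop (𝓝 0) := by
  exact hp.inv_tendsto_atTop.congr fun k => (one_div (p k)).symm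

lemma GL.ratio_lim {p : ℕ → ℝ} (hp : Tendsto p atTop atTop) :
    Tendsto (fun k => (p k - 4) / p k) atTop (𝓝 1) := by
  have h1 : Tendsto (fun k => 1 - 4 * (1 / p k)) atTop (𝓝 (1 - 4 * 0)) :=
    tendsto_const_nhds.sub ((GL.inv_p hp).const_mul 4)
  rw [show (1 : ℝ) - 4 * 0 = 1 by ring] at h1
  refine h1.congr' ?_
  filter_upwards [hp.eventually_gt_atTop 0] with k hk
  field_simp

lemma GL.unif_sub {F : ℕ → E → ℝ} {f : E → ℝ} {s : Set E}
    (h : TendstoUniformlyOn F f atTop s) (g : E → ℝ) :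
    TendstoUniformlyOn (fun k x => F k x - g x) (fun x => f x - g x) atTop s := by
  rw [Metric.tendstoUniformlyOn_iff] at h ⊢
  intro δ hδ
  filter_upwards [h δ hδ] with k hk x hx
  have := hk x hx
  rw [Real.dist_eq] at this ⊢
  have e : f x - g x - (F k x - g x) = f x - F k x := by ring
  rw [e]; exact this

lemma GL.unif_sub' {F : ℕ → E → ℝ} {f : E → ℝ} {s : Set E}
    (h : TendstoUniformlyOn F f atTop s) (g : E → ℝ) :
    TendstoUniformlyOn (fun k x => g x - F k x) (fun x => g x - f x) atTop s := by
  rw [Metric.tendstoUniformlyOn_iff] at h ⊢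
  intro δ hδ
  filter_upwards [h δ hδ] with k hk x hx
  have := hk x hx
  rw [Real.dist_eq] at this ⊢
  have e : g x - f x - (g x - F k x) = -(f x - F k x) := by ring
  rw [e, abs_neg]; exact this

/-! ### Existence of converging minimum points -/

lemma GL.exists_min_seq {Ω : Set E} {x₀ : E} (W : E → ℝ) (v : ℕ → E → ℝ)
    (hvc : ∀ k, ContinuousOn (v k) (closure Ω))
    (huc : TendstoUniformlyOn v W atTop (closure Ω))
    {ε r : ℝ} (hε : 0 < ε) (hr : 0 < r) (hKΩ : closedBall x₀ r ⊆ Ω)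
    (hstrict : ∀ x ∈ closedBall x₀ r, W x₀ + ε * ‖x - x₀‖ ^ 2 ≤ W x) :
    ∃ xs : ℕ → E, (∀ k, xs k ∈ closedBall x₀ r) ∧
      (∀ k, IsMinOn (v k) (closedBall x₀ r) (xs k)) ∧ Tendsto xs atTop (𝓝 x₀) := by
  have hsub : closedBall x₀ r ⊆ closure Ω := hKΩ.trans subset_closure
  have hex : ∀ k, ∃ y ∈ closedBall x₀ r, IsMinOn (v k) (closedBall x₀ r) y := fun k =>
    (isCompact_closedBall x₀ r).exists_isMinOn
      (nonempty_closedBall.2 hr.le) ((hvc k).mono hsub)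
  choose xs hxsK hxs using hex
  refine ⟨xs, hxsK, hxs, ?_⟩
  rw [Metric.tendsto_atTop]
  intro δ hδ
  set δ' := min δ r with hδ'
  have hδ'0 : 0 < δ' := lt_min hδ hr
  have hm : 0 < ε * δ' ^ 2 / 3 := by positivity
  obtain ⟨N, hN⟩ := (Metric.tendstoUniformlyOn_iff.1 huc _ hm).exists_forall_of_atTop
  refine ⟨N, fun k hk => ?_⟩
  have hNk := hN k hk
  by_contra hcon
  push_neg at hcon
  have hdist : δ' ≤ dist (xs k) x₀ := by
    rcases le_or_gt δ' (dist (xs k) x₀) with h | h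
    · exact h
    · exact absurd (h.trans_le (min_le_left δ r)) (not_lt.2 hcon)
  have ha : v k (xs k) ≤ v k x₀ := hxs k (mem_closedBall_self hr.le)
  have hb : v k x₀ < W x₀ + ε * δ' ^ 2 / 3 := by
    have := hNk x₀ (hsub (mem_closedBall_self hr.le))
    rw [Real.dist_eq, abs_sub_lt_iff] at this
    linarith [this.2]
  have hc : W (xs k) ≤ v k (xs k) + ε * δ' ^ 2 / 3 := by
    have := hNk (xs k) (hsub (hxsK k))
    rw [Real.dist_eq, abs_sub_lt_iff] at this
    linarith [this.1]
  have hd : W x₀ + ε * δ' ^ 2 ≤ W (xs k) := by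
    have h1 := hstrict (xs k) (hxsK k)
    have h2 : δ' ^ 2 ≤ ‖xs k - x₀‖ ^ 2 := by
      have hdn : ‖xs k - x₀‖ = dist (xs k) x₀ := (dist_eq_norm _ _).symm
      nlinarith [hδ'0.le, dist_nonneg (x := xs k) (y := x₀)]
    nlinarith [hε.le]
  nlinarith [hm]


lemma GL.exp_rpow (t s : ℝ) : (Real.exp t) ^ s = Real.exp (t * s) := by
  rw [rpow_def_of_pos (Real.exp_pos t), Real.log_exp]

lemma GL.rpow_core {P G C : ℝ} (hP : 4 < P) (hC : 0 ≤ C) (hG : 0 ≤ G) :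
    (C * P ^ (4:ℕ) * (P * G) ^ (P - 4)) ^ (1/P) =
      C ^ (1/P) * (P * (G ^ ((P - 4)/P))) := by
  have hP0 : 0 < P := by linarith
  have hPG : (0:ℝ) ≤ P * G := mul_nonneg hP0.le hG
  have hP4 : (0:ℝ) ≤ (P:ℝ) ^ (4:ℕ) := by positivity
  have hB : (0:ℝ) ≤ (P * G) ^ (P - 4) := rpow_nonneg hPG _
  rw [Real.mul_rpow (mul_nonneg hC hP4) hB, Real.mul_rpow hC hP4]
  have h1 : ((P:ℝ) ^ (4:ℕ)) ^ (1/P) = P ^ ((4:ℝ)/P) := by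
    rw [← Real.rpow_natCast P 4, ← Real.rpow_mul hP0.le]
    norm_num [div_eq_mul_inv]
  have h2 : ((P * G) ^ (P - 4)) ^ (1/P) = P ^ ((P-4)/P) * G ^ ((P-4)/P) := by
    rw [← Real.rpow_mul hPG, mul_one_div, Real.mul_rpow hP0.le hG]
  rw [h1, h2]
  have h3 : P ^ ((4:ℝ)/P) * (P ^ ((P-4)/P) * G ^ ((P-4)/P))
      = (P ^ ((4:ℝ)/P) * P ^ ((P-4)/P)) * G ^ ((P-4)/P) := by ring
  have h4 : P ^ ((4:ℝ)/P) * P ^ ((P-4)/P) = P := by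
    rw [← Real.rpow_add hP0]
    have : (4:ℝ)/P + (P-4)/P = 1 := by field_simp; ring
    rw [this, Real.rpow_one]
  rw [mul_assoc, h3, h4]

lemma GL.rpow_step {P G lam C x : ℝ} (hP : 4 < P) (hlam : 0 < lam) (hC : 0 ≤ C) (hG : 0 ≤ G)
    (h : lam * Real.exp x ≤ C * P ^ (4:ℕ) * (P * G) ^ (P - 4)) :
    lam ^ (1/P) / P * Real.exp (x / P) ≤ C ^ (1/P) * G ^ ((P - 4)/P) := by
  have hP0 : 0 < P := by linarith
  have h1p : (0:ℝ) ≤ 1/P := by positivity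
  have key := Real.rpow_le_rpow (le_of_lt (mul_pos hlam (Real.exp_pos x))) h h1p
  rw [Real.mul_rpow hlam.le (Real.exp_pos x).le, GL.exp_rpow, mul_one_div,
    GL.rpow_core hP hC hG] at key
  rw [div_mul_eq_mul_div, div_le_iff₀ hP0]
  calc lam ^ (1/P) * Real.exp (x/P) ≤ C ^ (1/P) * (P * G ^ ((P-4)/P)) := key
    _ = C ^ (1/P) * G ^ ((P-4)/P) * P := by ring

lemma GL.rpow_step' {P G lam C x : ℝ} (hP : 4 < P) (hlam : 0 < lam) (hC : 0 ≤ C) (hG : 0 ≤ G)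
    (h : C * P ^ (4:ℕ) * (P * G) ^ (P - 4) ≤ lam * Real.exp x) :
    C ^ (1/P) * G ^ ((P - 4)/P) ≤ lam ^ (1/P) / P * Real.exp (x / P) := by
  have hP0 : 0 < P := by linarith
  have h1p : (0:ℝ) ≤ 1/P := by positivity
  have hnn : (0:ℝ) ≤ C * P ^ (4:ℕ) * (P * G) ^ (P - 4) := by
    have : (0:ℝ) ≤ (P * G) ^ (P - 4) := rpow_nonneg (mul_nonneg hP0.le hG) _
    positivity
  have key := Real.rpow_le_rpow hnn h h1p
  rw [Real.mul_rpow hlam.le (Real.exp_pos x).le, GL.exp_rpow, mul_one_div,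
    GL.rpow_core hP hC hG] at key
  rw [div_mul_eq_mul_div, le_div_iff₀ hP0]
  calc C ^ (1/P) * G ^ ((P-4)/P) * P = C ^ (1/P) * (P * G ^ ((P-4)/P)) := by ring
    _ ≤ lam ^ (1/P) * Real.exp (x/P) := key


/-- Localization: from a local min of `U − φ` at `x₀`, a radius of strictness for the
perturbed test function. -/
lemma GL.localize {Ω : Set E} (hΩo : IsOpen Ω) {x₀ : E} (hx₀ : x₀ ∈ Ω)
    {U φ : E → ℝ} (hmin : IsLocalMinOn (fun x => U x - φ x) Ω x₀) {ε : ℝ} (hε : 0 < ε) :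
    ∃ r > 0, closedBall x₀ r ⊆ Ω ∧
      ∀ x ∈ closedBall x₀ r,
        (U x₀ - (φ x₀ + (-ε) * qd x₀ x₀)) + ε * ‖x - x₀‖ ^ 2 ≤
          U x - (φ x + (-ε) * qd x₀ x) := by
  have hmin' : ∀ᶠ y in 𝓝 x₀, U x₀ - φ x₀ ≤ U y - φ y := by
    have := hmin
    rw [IsLocalMinOn, hΩo.nhdsWithin_eq hx₀] at this
    exact this
  rw [Metric.eventually_nhds_iff] at hmin'
  obtain ⟨δ, hδ, hδp⟩ := hmin'
  obtain ⟨δ₂, hδ₂, hball⟩ := Metric.isOpen_iff.1 hΩo x₀ hx₀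
  refine ⟨min δ δ₂ / 2, by positivity, ?_, ?_⟩
  · intro y hy
    apply hball
    rw [mem_closedBall] at hy
    rw [mem_ball]
    have : min δ δ₂ ≤ δ₂ := min_le_right _ _
    have h2 : (0:ℝ) < min δ δ₂ := lt_min hδ hδ₂
    linarith
  · intro x hx
    rw [mem_closedBall] at hx
    have h2 : (0:ℝ) < min δ δ₂ := lt_min hδ hδ₂
    have hxd : dist x x₀ < δ := by
      have : min δ δ₂ ≤ δ := min_le_left _ _
      linarith
    have h3 := hδp hxd
    have h4 : qd x₀ x = ‖x - x₀‖ ^ 2 := GL.qd_eq x₀ x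
    have h5 : qd x₀ x₀ = ‖(x₀ : E) - x₀‖ ^ 2 := GL.qd_eq x₀ x₀
    rw [h4, h5]
    simp only [sub_self, norm_zero]
    nlinarith

end GLAux
section GLKey2
variable {n : ℕ}
local notation "E" => EuclideanSpace ℝ (Fin n)

lemma GL.tendsto_dist_lt {f : ℕ → ℝ} {a b : ℝ} (h : Tendsto f atTop (𝓝 a)) (hb : 0 < b) :
    ∀ᶠ k in atTop, |f k - a| < b := by
  filter_upwards [h (Metric.ball_mem_nhds a hb)] with k hk
  simpa [Real.dist_eq] using hk

set_option maxHeartbeats 1000000 in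
lemma GL.key_super {Ω : Set E} (hΩo : IsOpen Ω) {Λ : ℝ}
    {p lam : ℕ → ℝ} (hp4 : ∀ k, 4 < p k) (hp : Tendsto p atTop atTop)
    (hlam : ∀ k, 0 < lam k)
    {u : ℕ → E → ℝ} (hu_cont : ∀ k, ContinuousOn (u k) (closure Ω))
    (hsup : ∀ k, IsPSuper Ω (p k) (lam k) (u k))
    (hscale : Tendsto (fun k => lam k ^ (1 / p k) / p k) atTop (𝓝 Λ))
    {U : E → ℝ} (hU : ContinuousOn U (closure Ω))
    (hconv : TendstoUniformlyOn (fun k x => u k x / p k) U atTop (closure Ω))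
    {x₀ : E} (hx₀ : x₀ ∈ Ω) {φ : E → ℝ} (hφ : ContDiff ℝ 2 φ)
    (hmin : IsLocalMinOn (fun x => U x - φ x) Ω x₀) {ε : ℝ} (hε : 0 < ε) :
    Λ * Real.exp (U x₀) ≤ ‖gradient φ x₀‖ ∧
      hessQ φ x₀ ≤ 2 * ε * ‖gradient φ x₀‖ ^ 2 := by
  classical
  set G := ‖gradient φ x₀‖ with hGdef
  set φt : E → ℝ := fun x => φ x + (-ε) * qd x₀ x with hφtdef
  have hφt : ContDiff ℝ 2 φt := GL.phit_contDiff hφ _ x₀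
  have hgt : gradient φt x₀ = gradient φ x₀ := GL.phit_grad hφ _ x₀
  have hht : hessQ φt x₀ = hessQ φ x₀ - 2 * ε * G ^ 2 := by
    rw [hφtdef, GL.phit_hessQ hφ _ x₀]; ring
  obtain ⟨r, hr, hKΩ, hstr⟩ := GL.localize hΩo hx₀ hmin hε
  have huc : TendstoUniformlyOn (fun k x => u k x / p k - φt x)
      (fun x => U x - φt x) atTop (closure Ω) := GL.unif_sub hconv φt
  have hvc : ∀ k, ContinuousOn (fun x => u k x / p k - φt x) (closure Ω) := fun k =>
    ((hu_cont k).div_const _).sub hφt.continuous.continuousOn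
  obtain ⟨xs, hxsK, hxs, hxsT⟩ := GL.exists_min_seq (fun x => U x - φt x) _ hvc huc hε hr hKΩ
    (fun x hx => hstr x hx)
  set g : ℕ → ℝ := fun k => ‖gradient φt (xs k)‖ with hgdef
  set L : ℕ → ℝ := fun k => lapl φt (xs k) with hLdef
  set H : ℕ → ℝ := fun k => hessQ φt (xs k) with hHdef
  set L0 : ℝ := lapl φt x₀ with hL0def
  set H0 : ℝ := hessQ φt x₀ with hH0def
  have hp0 : ∀ k, (0:ℝ) < p k := fun k => lt_trans (by norm_num) (hp4 k)
  -- eventual interior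
  have hball : ∀ᶠ k in atTop, xs k ∈ ball x₀ r :=
    hxsT.eventually (isOpen_ball.eventually_mem (mem_ball_self hr))
  -- main inequality from the p-supersolution property
  have hineq : ∀ᶠ k in atTop, lam k * Real.exp (u k (xs k)) ≤
      (p k * g k) ^ (p k - 4) * ((p k) ^ 3 *
        (-(g k ^ 2 * L k + (p k - 2) * H k))) := by
    filter_upwards [hball] with k hbk
    set ψ : E → ℝ := fun x => p k * φt x with hψdef
    have hψc : ContDiff ℝ 2 ψ := contDiff_const.mul hφt
    have hlm : IsLocalMinOn (fun x => u k x - ψ x) Ω (xs k) := by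
      have hK𝓝 : closedBall x₀ r ∈ 𝓝[Ω] (xs k) :=
        mem_nhdsWithin_of_mem_nhds
          (Filter.mem_of_superset (isOpen_ball.mem_nhds hbk) ball_subset_closedBall)
      refine Filter.eventually_of_mem hK𝓝 fun x hx => ?_
      have h1 := hxs k hx
      have h2 := mul_le_mul_of_nonneg_left h1 (hp0 k).le
      have e : ∀ y : E, p k * (u k y / p k - φt y) = u k y - ψ y := fun y => by
        have hpk : p k ≠ 0 := ne_of_gt (hp0 k)
        field_simp [hψdef]
        rfl
      simp only [e] at h2
      exact h2
    have happ := hsup k (xs k) (hKΩ (hxsK k)) ψ hψc hlm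
    have hgψ : gradient ψ (xs k) = p k • gradient φt (xs k) :=
      GL.grad_smul (p k) (hφt.differentiable two_ne_zero |>.differentiableAt)
    have hnψ : ‖gradient ψ (xs k)‖ = p k * g k := by
      rw [hgψ, norm_smul, Real.norm_eq_abs, abs_of_pos (hp0 k)]
    have hlψ : lapl ψ (xs k) = p k * L k := GL.lapl_smul (p k) hφt (xs k)
    have hhψ : hessQ ψ (xs k) = (p k) ^ 3 * H k := GL.hessQ_smul (p k) hφt (xs k)
    rw [hnψ, hlψ, hhψ] at happ
    calc lam k * Real.exp (u k (xs k)) ≤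
        -((p k * g k) ^ (p k - 4) *
          ((p k * g k) ^ 2 * (p k * L k) + (p k - 2) * ((p k) ^ 3 * H k))) := happ
      _ = (p k * g k) ^ (p k - 4) * ((p k) ^ 3 *
          (-(g k ^ 2 * L k + (p k - 2) * H k))) := by ring
  -- limits
  have hgT : Tendsto g atTop (𝓝 G) := by
    have h1 : Tendsto (fun k => ‖gradient φt (xs k)‖) atTop (𝓝 ‖gradient φt x₀‖) :=
      ((continuous_norm.comp (GL.grad_cont hφt)).tendsto x₀).comp hxsT
    rwa [hgt] at h1
  have hLT : Tendsto L atTop (𝓝 L0) := ((GL.lapl_cont hφt).tendsto x₀).comp hxsT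
  have hHT : Tendsto H atTop (𝓝 H0) := ((GL.hessQ_cont hφt).tendsto x₀).comp hxsT
  have hu_pt : Tendsto (fun k => u k (xs k) / p k) atTop (𝓝 (U x₀)) := by
    refine hconv.tendsto_comp (hU.continuousWithinAt (subset_closure hx₀)) ?_
    refine tendsto_nhdsWithin_iff.2 ⟨hxsT, Filter.Eventually.of_forall fun k =>
      subset_closure (hKΩ (hxsK k))⟩
  have hpos : ∀ k, (0:ℝ) < lam k * Real.exp (u k (xs k)) := fun k =>
    mul_pos (hlam k) (Real.exp_pos _)
  -- positivity of g and of D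
  have hDg : ∀ᶠ k in atTop, 0 < g k ∧ 0 < -(g k ^ 2 * L k + (p k - 2) * H k) := by
    filter_upwards [hineq] with k hk
    have hA : (0:ℝ) ≤ (p k * g k) ^ (p k - 4) :=
      rpow_nonneg (mul_nonneg (hp0 k).le (norm_nonneg _)) _
    have hg0 : 0 < g k := by
      rcases (norm_nonneg (gradient φt (xs k))).lt_or_eq with h | h
      · exact h
      · exfalso
        have hz : g k = 0 := h.symm
        rw [hz, mul_zero, Real.zero_rpow (by have := hp4 k; intro hc; linarith), zero_mul] at hk
        exact absurd (lt_of_lt_of_le (hpos k) hk) (lt_irrefl 0)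
    refine ⟨hg0, ?_⟩
    by_contra hD
    push_neg at hD
    have : (p k * g k) ^ (p k - 4) * ((p k) ^ 3 *
        (-(g k ^ 2 * L k + (p k - 2) * H k))) ≤ 0 := by
      apply mul_nonpos_of_nonneg_of_nonpos hA
      apply mul_nonpos_of_nonneg_of_nonpos (pow_nonneg (hp0 k).le 3)
      linarith
    exact absurd (lt_of_lt_of_le (hpos k) (hk.trans this)) (lt_irrefl 0)
  -- Part 2 : hessQ bound
  have hpart2 : hessQ φ x₀ ≤ 2 * ε * G ^ 2 := by
    have hcT : Tendsto (fun k => (G + 1) ^ 2 * (|L0| + 1) / (p k - 2)) atTop (𝓝 0) := by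
      apply Tendsto.div_atTop (tendsto_const_nhds)
      exact tendsto_atTop_add_const_right atTop (-2) hp
    have hHle : ∀ᶠ k in atTop, H k ≤ (G + 1) ^ 2 * (|L0| + 1) / (p k - 2) := by
      filter_upwards [hDg, GL.tendsto_dist_lt hgT one_pos, GL.tendsto_dist_lt hLT one_pos]
        with k hD hgb hLb
      have hp2 : (0:ℝ) < p k - 2 := by have := hp4 k; linarith
      rw [le_div_iff₀ hp2]
      have h1 : g k ≤ G + 1 := by
        have := abs_sub_lt_iff.1 hgb; linarith [this.1]
      have h2 : |L k| ≤ |L0| + 1 := by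
        have ha : |L k| ≤ |L0| + |L k - L0| := by
          have := abs_add_le L0 (L k - L0)
          simpa using this
        linarith [le_of_lt hLb]
      have hgsq : g k ^ 2 ≤ (G + 1) ^ 2 := by nlinarith [hD.1.le]
      have hLk : -(L k) ≤ |L0| + 1 := le_trans (neg_le_abs _) h2
      have hprod : g k ^ 2 * (-(L k)) ≤ (G + 1) ^ 2 * (|L0| + 1) := by
        rcases le_or_gt (-(L k)) 0 with hneg | hpos
        · have : g k ^ 2 * (-(L k)) ≤ 0 := mul_nonpos_of_nonneg_of_nonpos (sq_nonneg _) hneg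
          have hR : (0:ℝ) ≤ (G + 1) ^ 2 * (|L0| + 1) := by positivity
          linarith
        · exact mul_le_mul hgsq hLk hpos.le (by positivity)
      nlinarith [hD.2]
    have hH0le : H0 ≤ 0 := le_of_tendsto_of_tendsto hHT hcT hHle
    rw [hht] at hH0le
    linarith
  refine ⟨?_, hpart2⟩
  have hGnn : (0:ℝ) ≤ G := norm_nonneg _
  have hclaim : ∀ η : ℝ, 0 < η → Λ * Real.exp (U x₀) ≤ G + η := by
    intro η hη
    have hGη : (0:ℝ) < G + η := by linarith
    set C1 : ℝ := (G + 1) ^ 2 * (|L0| + 1) with hC1def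
    set C2 : ℝ := |H0| + 1 with hC2def
    set C : ℝ := max (C1 + C2) 1 with hCdef
    have hC0 : (0:ℝ) < C := lt_of_lt_of_le one_pos (le_max_right _ _)
    have hC1nn : (0:ℝ) ≤ C1 := by positivity
    have hC2nn : (0:ℝ) ≤ C2 := by positivity
    have hCle : C1 + C2 ≤ C := le_max_left _ _
    have hchain : ∀ᶠ k in atTop, lam k ^ (1 / p k) / p k * Real.exp (u k (xs k) / p k) ≤
        C ^ (1 / p k) * (G + η) ^ ((p k - 4) / p k) := by
      filter_upwards [hineq, hDg, GL.tendsto_dist_lt hgT hη, GL.tendsto_dist_lt hgT one_pos,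
        GL.tendsto_dist_lt hLT one_pos, GL.tendsto_dist_lt hHT one_pos,
        hp.eventually_ge_atTop 1] with k hk hD hgη hg1 hL1 hH1 hpk1
      have hp4k := hp4 k
      have hgle : g k ≤ G + η := by have := abs_sub_lt_iff.1 hgη; linarith [this.1]
      have hL2 : |L k| ≤ |L0| + 1 := by
        have ha : |L k| ≤ |L0| + |L k - L0| := by
          have := abs_add_le L0 (L k - L0); simpa using this
        linarith [le_of_lt hL1]
      have hH2 : |H k| ≤ |H0| + 1 := by
        have ha : |H k| ≤ |H0| + |H k - H0| := by
          have := abs_add_le H0 (H k - H0); simpa using this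
        linarith [le_of_lt hH1]
      have hg1' : g k ≤ G + 1 := by have := abs_sub_lt_iff.1 hg1; linarith [this.1]
      have hgsq : g k ^ 2 ≤ (G + 1) ^ 2 := by nlinarith [hD.1.le, hg1']
      have hLk : -(L k) ≤ |L0| + 1 := le_trans (neg_le_abs _) hL2
      have hprod : g k ^ 2 * (-(L k)) ≤ C1 := by
        rw [hC1def]
        rcases le_or_gt (-(L k)) 0 with hneg | hpos
        · have h5 : g k ^ 2 * (-(L k)) ≤ 0 := mul_nonpos_of_nonneg_of_nonpos (sq_nonneg _) hneg
          have hR : (0:ℝ) ≤ (G + 1) ^ 2 * (|L0| + 1) := by positivity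
          linarith
        · exact mul_le_mul hgsq hLk hpos.le (by positivity)
      have hD2 : -(g k ^ 2 * L k + (p k - 2) * H k) ≤ p k * C := by
        have hHk : (p k - 2) * (-(H k)) ≤ (p k - 2) * C2 := by
          apply mul_le_mul_of_nonneg_left _ (by linarith)
          exact le_trans (neg_le_abs _) (by rw [hC2def]; linarith)
        have h6 : (p k - 2) * C2 ≤ p k * C2 := by nlinarith
        have h7 : C1 + p k * C2 ≤ p k * C := by nlinarith
        nlinarith
      have hA : (0:ℝ) ≤ (p k * g k) ^ (p k - 4) :=
        rpow_nonneg (mul_nonneg (hp0 k).le (norm_nonneg _)) _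
      have hstep : lam k * Real.exp (u k (xs k)) ≤
          C * p k ^ (4:ℕ) * (p k * (G + η)) ^ (p k - 4) := by
        calc lam k * Real.exp (u k (xs k))
            ≤ (p k * g k) ^ (p k - 4) * ((p k) ^ 3 *
              (-(g k ^ 2 * L k + (p k - 2) * H k))) := hk
          _ ≤ (p k * g k) ^ (p k - 4) * ((p k) ^ 3 * (p k * C)) := by
              apply mul_le_mul_of_nonneg_left _ hA
              exact mul_le_mul_of_nonneg_left hD2 (pow_nonneg (hp0 k).le 3)
          _ ≤ (p k * (G + η)) ^ (p k - 4) * ((p k) ^ 3 * (p k * C)) := by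
              apply mul_le_mul_of_nonneg_right
              · exact rpow_le_rpow (mul_nonneg (hp0 k).le (norm_nonneg _))
                  (mul_le_mul_of_nonneg_left hgle (hp0 k).le) (by linarith)
              · exact mul_nonneg (pow_nonneg (hp0 k).le 3)
                  (mul_nonneg (hp0 k).le hC0.le)
          _ = C * p k ^ (4:ℕ) * (p k * (G + η)) ^ (p k - 4) := by ring
      exact GL.rpow_step (hp4 k) (hlam k) hC0.le hGη.le hstep
    have hLHS : Tendsto (fun k => lam k ^ (1 / p k) / p k * Real.exp (u k (xs k) / p k))
        atTop (𝓝 (Λ * Real.exp (U x₀))) :=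
      hscale.mul ((Real.continuous_exp.tendsto _).comp hu_pt)
    have hRHS : Tendsto (fun k => C ^ (1 / p k) * (G + η) ^ ((p k - 4) / p k))
        atTop (𝓝 (G + η)) := by
      have h1 := GL.rpow_lim hC0 (GL.inv_p hp)
      have h2 := GL.rpow_lim hGη (GL.ratio_lim hp)
      have h3 := h1.mul h2
      rw [rpow_zero, rpow_one, one_mul] at h3
      exact h3
    exact le_of_tendsto_of_tendsto hLHS hRHS hchain
  by_contra hcon
  push_neg at hcon
  have := hclaim ((Λ * Real.exp (U x₀) - G) / 2) (by linarith)
  linarith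
end GLKey2
section GLKey3
variable {n : ℕ}
local notation "E" => EuclideanSpace ℝ (Fin n)

set_option maxHeartbeats 1000000 in
lemma GL.key_sub {Ω : Set E} (hΩo : IsOpen Ω) {Λ : ℝ}
    {p lam : ℕ → ℝ} (hp4 : ∀ k, 4 < p k) (hp : Tendsto p atTop atTop)
    (hlam : ∀ k, 0 < lam k)
    {u : ℕ → E → ℝ} (hu_cont : ∀ k, ContinuousOn (u k) (closure Ω))
    (hsub : ∀ k, IsPSub Ω (p k) (lam k) (u k))
    (hscale : Tendsto (fun k => lam k ^ (1 / p k) / p k) atTop (𝓝 Λ))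
    {U : E → ℝ} (hU : ContinuousOn U (closure Ω))
    (hconv : TendstoUniformlyOn (fun k x => u k x / p k) U atTop (closure Ω))
    {x₀ : E} (hx₀ : x₀ ∈ Ω) {φ : E → ℝ} (hφ : ContDiff ℝ 2 φ)
    (hmax : IsLocalMaxOn (fun x => U x - φ x) Ω x₀) {ε : ℝ} (hε : 0 < ε)
    (hH0neg : hessQ φ x₀ + 2 * ε * ‖gradient φ x₀‖ ^ 2 < 0) :
    ‖gradient φ x₀‖ ≤ Λ * Real.exp (U x₀) := by
  classical
  set G := ‖gradient φ x₀‖ with hGdef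
  set φt : E → ℝ := fun x => φ x + ε * qd x₀ x with hφtdef
  have hφt : ContDiff ℝ 2 φt := GL.phit_contDiff hφ _ x₀
  have hgt : gradient φt x₀ = gradient φ x₀ := GL.phit_grad hφ _ x₀
  have hht : hessQ φt x₀ = hessQ φ x₀ + 2 * ε * G ^ 2 := by
    rw [hφtdef, GL.phit_hessQ hφ _ x₀]
  have hH0 : hessQ φt x₀ < 0 := by rw [hht]; exact hH0neg
  have hG0 : 0 < G := by
    rcases (norm_nonneg (gradient φ x₀)).lt_or_eq with h | h
    · exact h
    · exfalso
      have hw : gradient φ x₀ = 0 := norm_eq_zero.1 h.symm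
      have hq : hessQ φ x₀ = 0 := by
        unfold hessQ
        exact ContinuousMultilinearMap.map_coord_zero _ (0 : Fin 2) (by simp [hw])
      have hGz : G = 0 := by rw [hGdef, hw, norm_zero]
      rw [hq, hGz] at hH0neg
      norm_num at hH0neg
  have hmin' : IsLocalMinOn (fun x => φ x - U x) Ω x₀ := by
    have h : ∀ᶠ x in 𝓝[Ω] x₀, U x - φ x ≤ U x₀ - φ x₀ := hmax
    exact h.mono fun x hx => by dsimp only; linarith
  obtain ⟨r, hr, hKΩ, hstr⟩ := GL.localize hΩo hx₀ hmin' hε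
  have hstr' : ∀ x ∈ closedBall x₀ r,
      (φt x₀ - U x₀) + ε * ‖x - x₀‖ ^ 2 ≤ φt x - U x := by
    intro x hx
    have h2 := hstr x hx
    show (φ x₀ + ε * qd x₀ x₀ - U x₀) + ε * ‖x - x₀‖ ^ 2 ≤ φ x + ε * qd x₀ x - U x
    linarith
  have huc : TendstoUniformlyOn (fun k x => φt x - u k x / p k)
      (fun x => φt x - U x) atTop (closure Ω) := GL.unif_sub' hconv φt
  have hvc : ∀ k, ContinuousOn (fun x => φt x - u k x / p k) (closure Ω) := fun k =>
    hφt.continuous.continuousOn.sub ((hu_cont k).div_const _)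
  obtain ⟨xs, hxsK, hxs, hxsT⟩ := GL.exists_min_seq (fun x => φt x - U x) _ hvc huc hε hr hKΩ
    hstr'
  set g : ℕ → ℝ := fun k => ‖gradient φt (xs k)‖ with hgdef
  set L : ℕ → ℝ := fun k => lapl φt (xs k) with hLdef
  set H : ℕ → ℝ := fun k => hessQ φt (xs k) with hHdef
  set L0 : ℝ := lapl φt x₀ with hL0def
  set H0 : ℝ := hessQ φt x₀ with hH0def
  have hp0 : ∀ k, (0:ℝ) < p k := fun k => lt_trans (by norm_num) (hp4 k)
  have hball : ∀ᶠ k in atTop, xs k ∈ ball x₀ r :=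
    hxsT.eventually (isOpen_ball.eventually_mem (mem_ball_self hr))
  have hineq : ∀ᶠ k in atTop,
      (p k * g k) ^ (p k - 4) * ((p k) ^ 3 * (-(g k ^ 2 * L k + (p k - 2) * H k))) ≤
        lam k * Real.exp (u k (xs k)) := by
    filter_upwards [hball] with k hbk
    set ψ : E → ℝ := fun x => p k * φt x with hψdef
    have hψc : ContDiff ℝ 2 ψ := contDiff_const.mul hφt
    have hlm : IsLocalMaxOn (fun x => u k x - ψ x) Ω (xs k) := by
      have hK𝓝 : closedBall x₀ r ∈ 𝓝[Ω] (xs k) :=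
        mem_nhdsWithin_of_mem_nhds
          (Filter.mem_of_superset (isOpen_ball.mem_nhds hbk) ball_subset_closedBall)
      refine Filter.eventually_of_mem hK𝓝 fun x hx => ?_
      have h1 := hxs k hx
      have h2 := mul_le_mul_of_nonneg_left h1 (hp0 k).le
      have e : ∀ y : E, p k * (φt y - u k y / p k) = ψ y - u k y := fun y => by
        have hpk : p k ≠ 0 := ne_of_gt (hp0 k)
        field_simp [hψdef]
        ring
      simp only [e] at h2
      dsimp only
      linarith
    have happ := hsub k (xs k) (hKΩ (hxsK k)) ψ hψc hlm
    have hgψ : gradient ψ (xs k) = p k • gradient φt (xs k) :=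
      GL.grad_smul (p k) (hφt.differentiable two_ne_zero |>.differentiableAt)
    have hnψ : ‖gradient ψ (xs k)‖ = p k * g k := by
      rw [hgψ, norm_smul, Real.norm_eq_abs, abs_of_pos (hp0 k)]
    have hlψ : lapl ψ (xs k) = p k * L k := GL.lapl_smul (p k) hφt (xs k)
    have hhψ : hessQ ψ (xs k) = (p k) ^ 3 * H k := GL.hessQ_smul (p k) hφt (xs k)
    rw [hnψ, hlψ, hhψ] at happ
    calc (p k * g k) ^ (p k - 4) * ((p k) ^ 3 * (-(g k ^ 2 * L k + (p k - 2) * H k)))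
        = -((p k * g k) ^ (p k - 4) *
          ((p k * g k) ^ 2 * (p k * L k) + (p k - 2) * ((p k) ^ 3 * H k))) := by ring
      _ ≤ lam k * Real.exp (u k (xs k)) := happ
  have hgT : Tendsto g atTop (𝓝 G) := by
    have h1 : Tendsto (fun k => ‖gradient φt (xs k)‖) atTop (𝓝 ‖gradient φt x₀‖) :=
      ((continuous_norm.comp (GL.grad_cont hφt)).tendsto x₀).comp hxsT
    rwa [hgt] at h1
  have hLT : Tendsto L atTop (𝓝 L0) := ((GL.lapl_cont hφt).tendsto x₀).comp hxsT
  have hHT : Tendsto H atTop (𝓝 H0) := ((GL.hessQ_cont hφt).tendsto x₀).comp hxsT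
  have hu_pt : Tendsto (fun k => u k (xs k) / p k) atTop (𝓝 (U x₀)) := by
    refine hconv.tendsto_comp (hU.continuousWithinAt (subset_closure hx₀)) ?_
    exact tendsto_nhdsWithin_iff.2 ⟨hxsT, Filter.Eventually.of_forall fun k =>
      subset_closure (hKΩ (hxsK k))⟩
  set c : ℝ := -H0 / 2 with hcdef
  have hc0 : 0 < c := by rw [hcdef]; linarith [hH0]
  set C1 : ℝ := (G + 1) ^ 2 * (|L0| + 1) with hC1def
  have hC1nn : (0:ℝ) ≤ C1 := by positivity
  have hclaim : ∀ η : ℝ, 0 < η → G ≤ Λ * Real.exp (U x₀) + η := by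
    intro η hη
    set η' : ℝ := min (η / 2) (G / 2) with hη'def
    have hη'0 : 0 < η' := lt_min (by linarith) (by linarith)
    have hη'G : η' ≤ G / 2 := min_le_right _ _
    have hη'η : η' ≤ η / 2 := min_le_left _ _
    have hGη' : 0 < G - η' := by linarith
    have hchain : ∀ᶠ k in atTop,
        (c / 4) ^ (1 / p k) * (G - η') ^ ((p k - 4) / p k) ≤
          lam k ^ (1 / p k) / p k * Real.exp (u k (xs k) / p k) := by
      filter_upwards [hineq, GL.tendsto_dist_lt hgT hη'0, GL.tendsto_dist_lt hgT one_pos,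
        GL.tendsto_dist_lt hLT one_pos, GL.tendsto_dist_lt hHT hc0,
        hp.eventually_ge_atTop (2 + 2 * C1 / c)] with k hk hgη hg1 hL1 hHc hpk
      have hp4k := hp4 k
      have hgge : G - η' ≤ g k := by have := abs_sub_lt_iff.1 hgη; linarith [this.2]
      have hg1' : g k ≤ G + 1 := by have := abs_sub_lt_iff.1 hg1; linarith [this.1]
      have hL2 : |L k| ≤ |L0| + 1 := by
        have ha : |L k| ≤ |L0| + |L k - L0| := by
          have := abs_add_le L0 (L k - L0); simpa using this
        linarith [le_of_lt hL1]
      have hHk : H k ≤ -c := by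
        have := abs_sub_lt_iff.1 hHc
        have h2 : H k < H0 + c := by linarith [this.1]
        rw [hcdef] at h2 ⊢
        linarith
      have hgsq : g k ^ 2 ≤ (G + 1) ^ 2 := by nlinarith [norm_nonneg (gradient φt (xs k))]
      have hLk : L k ≤ |L0| + 1 := le_trans (le_abs_self _) hL2
      have hprod : g k ^ 2 * L k ≤ C1 := by
        rw [hC1def]
        rcases le_or_gt (L k) 0 with hneg | hpos
        · have h5 : g k ^ 2 * L k ≤ 0 := mul_nonpos_of_nonneg_of_nonpos (sq_nonneg _) hneg
          have hR : (0:ℝ) ≤ (G + 1) ^ 2 * (|L0| + 1) := by positivity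
          linarith
        · exact mul_le_mul hgsq hLk hpos.le (by positivity)
      have hD : c / 4 * p k ≤ -(g k ^ 2 * L k + (p k - 2) * H k) := by
        have h6 : (p k - 2) * c ≤ (p k - 2) * (-(H k)) := by
          apply mul_le_mul_of_nonneg_left _ (by linarith)
          linarith
        have h7 : C1 ≤ (p k - 2) * c / 2 := by
          have h7a : 2 * C1 / c ≤ p k - 2 := by linarith
          have h7b := (div_le_iff₀ hc0).1 h7a
          linarith
        have h8 : p k / 2 ≤ p k - 2 := by linarith
        nlinarith [hc0.le]
      have hstep : c / 4 * p k ^ (4:ℕ) * (p k * (G - η')) ^ (p k - 4) ≤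
          lam k * Real.exp (u k (xs k)) := by
        calc c / 4 * p k ^ (4:ℕ) * (p k * (G - η')) ^ (p k - 4)
            = (p k * (G - η')) ^ (p k - 4) * ((p k) ^ 3 * (c / 4 * p k)) := by ring
          _ ≤ (p k * g k) ^ (p k - 4) * ((p k) ^ 3 * (-(g k ^ 2 * L k + (p k - 2) * H k))) := by
              apply mul_le_mul
              · exact rpow_le_rpow (mul_nonneg (hp0 k).le hGη'.le)
                  (mul_le_mul_of_nonneg_left hgge (hp0 k).le) (by linarith)
              · exact mul_le_mul_of_nonneg_left hD (pow_nonneg (hp0 k).le 3)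
              · refine mul_nonneg (pow_nonneg (hp0 k).le 3) ?_
                positivity
              · exact rpow_nonneg (mul_nonneg (hp0 k).le (norm_nonneg _)) _
          _ ≤ lam k * Real.exp (u k (xs k)) := hk
      exact GL.rpow_step' (hp4 k) (hlam k) (by positivity) hGη'.le hstep
    have hRHS : Tendsto (fun k => lam k ^ (1 / p k) / p k * Real.exp (u k (xs k) / p k))
        atTop (𝓝 (Λ * Real.exp (U x₀))) :=
      hscale.mul ((Real.continuous_exp.tendsto _).comp hu_pt)
    have hLHS : Tendsto (fun k => (c / 4) ^ (1 / p k) * (G - η') ^ ((p k - 4) / p k))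
        atTop (𝓝 (G - η')) := by
      have h1 := GL.rpow_lim (by positivity : (0:ℝ) < c / 4) (GL.inv_p hp)
      have h2 := GL.rpow_lim hGη' (GL.ratio_lim hp)
      have h3 := h1.mul h2
      rw [rpow_zero, rpow_one, one_mul] at h3
      exact h3
    have := le_of_tendsto_of_tendsto hLHS hRHS hchain
    linarith
  by_contra hcon
  push_neg at hcon
  have := hclaim ((G - Λ * Real.exp (U x₀)) / 2) (by linarith)
  linarith
end GLKey3
/-- Uniform limits of rescaled solutions of the Gelfand problem
`−Δ_{p_k} u = λ_k e^u`, `u = 0` on `∂Ω`, with `λ_k^{1/p_k}/p_k → Λ`, are viscosity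
solutions of `min{|∇u| − Λ e^u, −Δ_∞ u} = 0` in `Ω` with `u = 0` on `∂Ω`. -/
theorem gelfand_limit_equation {n : ℕ} (Ω : Set (EuclideanSpace ℝ (Fin n)))
    (hΩo : IsOpen Ω) (hΩb : Bornology.IsBounded Ω)
    (Λ : ℝ) (hΛ : 0 ≤ Λ)
    (p lam : ℕ → ℝ) (hp4 : ∀ k, 4 < p k) (hp : Tendsto p atTop atTop)
    (hlam : ∀ k, 0 < lam k)
    (u : ℕ → EuclideanSpace ℝ (Fin n) → ℝ)
    (hu_cont : ∀ k, ContinuousOn (u k) (closure Ω))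
    (hu_sol : ∀ k, IsPSol Ω (p k) (lam k) (u k))
    (hu_bdry : ∀ k, ∀ x ∈ frontier Ω, u k x = 0)
    (hscale : Tendsto (fun k => lam k ^ (1 / p k) / p k) atTop (𝓝 Λ))
    (U : EuclideanSpace ℝ (Fin n) → ℝ)
    (hconv : TendstoUniformlyOn (fun k x => u k x / p k) U atTop (closure Ω)) :
    ContinuousOn U (closure Ω) ∧ (∀ x ∈ frontier Ω, U x = 0) ∧ IsInftySol Ω Λ U := by
  have hU_cont : ContinuousOn U (closure Ω) :=
    hconv.continuousOn (Filter.Frequently.of_forall fun k => (hu_cont k).div_const _)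
  refine ⟨hU_cont, ?_, ?_, ?_⟩
  · -- boundary values
    intro x hx
    have hxc : x ∈ closure Ω := frontier_subset_closure hx
    have h1 : Tendsto (fun k => u k x / p k) atTop (𝓝 (U x)) := hconv.tendsto_at hxc
    have h2 : (fun k => u k x / p k) = fun _ => (0:ℝ) :=
      funext fun k => by rw [hu_bdry k x hx]; simp
    rw [h2] at h1
    exact (tendsto_nhds_unique h1 tendsto_const_nhds)
  · -- supersolution
    intro x₀ hx₀ φ hφ hmin
    constructor
    · have hks := GL.key_super hΩo hp4 hp hlam hu_cont (fun k => (hu_sol k).1)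
        hscale hU_cont hconv hx₀ hφ hmin one_pos
      linarith [hks.1]
    · by_contra hcon
      push_neg at hcon
      have hA : 0 < hessQ φ x₀ := by linarith
      set B : ℝ := ‖gradient φ x₀‖ ^ 2 with hBdef
      have hBnn : (0:ℝ) ≤ B := by rw [hBdef]; positivity
      have hε : 0 < hessQ φ x₀ / (4 * (B + 1)) := by positivity
      have hks := (GL.key_super hΩo hp4 hp hlam hu_cont (fun k => (hu_sol k).1)
        hscale hU_cont hconv hx₀ hφ hmin hε).2
      have heq : 2 * (hessQ φ x₀ / (4 * (B + 1))) * B =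
          hessQ φ x₀ * B / (2 * (B + 1)) := by
        field_simp; ring
      rw [heq] at hks
      have h4 : hessQ φ x₀ * (2 * (B + 1)) ≤ hessQ φ x₀ * B :=
        (le_div_iff₀ (by positivity)).1 hks
      nlinarith [mul_nonneg hA.le hBnn]
  · -- subsolution
    intro x₀ hx₀ φ hφ hmax
    rcases le_or_gt (-(hessQ φ x₀)) 0 with h | h
    · exact min_le_of_right_le h
    · have hA : hessQ φ x₀ < 0 := by linarith
      set B : ℝ := ‖gradient φ x₀‖ ^ 2 with hBdef
      have hBnn : (0:ℝ) ≤ B := by rw [hBdef]; positivity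
      have hε : 0 < -(hessQ φ x₀) / (4 * (B + 1)) := by positivity
      have hH0neg : hessQ φ x₀ + 2 * (-(hessQ φ x₀) / (4 * (B + 1))) * B < 0 := by
        have h5 : -(hessQ φ x₀) * B / (2 * (B + 1)) ≤ -(hessQ φ x₀) / 2 := by
          rw [div_le_div_iff₀ (by positivity) (by norm_num)]
          nlinarith
        have heq : 2 * (-(hessQ φ x₀) / (4 * (B + 1))) * B =
            -(hessQ φ x₀) * B / (2 * (B + 1)) := by
          field_simp; ring
        rw [heq]
        linarith
      have hks := GL.key_sub hΩo hp4 hp hlam hu_cont (fun k => (hu_sol k).2)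
        hscale hU_cont hconv hx₀ hφ hmax hε hH0neg
      exact min_le_of_left_le (by linarith)
end

section
/- Let Ω ⊆ ℝⁿ be a bounded open set and Λ > 0. Then every continuous viscosity solution u of min{|∇u| − Λ e^{u}, −Δ_∞ u} = 0 in Ω with u = 0 on ∂Ω satisfies u(x) ≥ Λ · dist(x, ∂Ω) for every x ∈ Ω. In particular, u > 0 in Ω and sup_{closure(Ω)} u ≥ Λ · sup_{x ∈ Ω} dist(x, ∂Ω). -/
set_option maxHeartbeats 1000000

open Real Set Metric Filter Topology

private lemma aux_grad_norm_eq {n : ℕ} {f : EuclideanSpace ℝ (Fin n) → ℝ}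
    {D : EuclideanSpace ℝ (Fin n) →L[ℝ] ℝ} {x : EuclideanSpace ℝ (Fin n)}
    (h : HasFDerivAt f D x) : ‖gradient f x‖ = ‖D‖ := by
  rw [gradient, h.fderiv, LinearIsometryEquiv.norm_map]

private lemma aux_frontier_inter {X : Type*} [TopologicalSpace X] {t s : Set X}
    (ht : IsPreconnected t) (h1 : (t ∩ s).Nonempty) (h2 : (t \ s).Nonempty) :
    (t ∩ frontier s).Nonempty := by
  by_contra h
  rw [not_nonempty_iff_eq_empty] at h
  have hsub : t ⊆ interior s ∪ interior sᶜ := by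
    intro z hz
    have hzf : z ∉ frontier s := fun hf => (eq_empty_iff_forall_notMem.1 h z) ⟨hz, hf⟩
    by_cases hzs : z ∈ closure s
    · refine Or.inl ?_
      rw [frontier, mem_diff] at hzf
      push_neg at hzf
      exact hzf hzs
    · exact Or.inr (by rwa [interior_compl, mem_compl_iff])
  have h1' : (t ∩ interior s).Nonempty := by
    obtain ⟨z, hzt, hzs⟩ := h1
    rcases hsub hzt with hi | hi
    · exact ⟨z, hzt, hi⟩
    · exact absurd (interior_subset hi) (by simpa using hzs)
  have h2' : (t ∩ interior sᶜ).Nonempty := by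
    obtain ⟨z, hzt, hzs⟩ := h2
    rcases hsub hzt with hi | hi
    · exact absurd (interior_subset hi) hzs
    · exact ⟨z, hzt, hi⟩
  obtain ⟨z, _, hz1, hz2⟩ := ht _ _ isOpen_interior isOpen_interior hsub h1' h2'
  exact (by simpa using interior_subset hz2 : z ∉ s) (interior_subset hz1)

private lemma aux_grad_bound {n : ℕ} (x₀ x₁ : EuclideanSpace ℝ (Fin n)) (c r δ : ℝ)
    (hδ : 0 < δ) (hc : 0 < c) :
    ‖gradient (fun x : EuclideanSpace ℝ (Fin n) =>
        c * (r + δ) - c * Real.sqrt (inner ℝ (x - x₀) (x - x₀) + δ ^ 2)) x₁‖ ≤ c := by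
  set q : EuclideanSpace ℝ (Fin n) → ℝ := fun x => (inner ℝ (x - x₀) (x - x₀) : ℝ) + δ ^ 2 with hq
  have qpos : ∀ x, 0 < q x := fun x => by
    have := real_inner_self_nonneg (x := x - x₀); positivity
  set v := x₁ - x₀ with hv
  have hid : HasFDerivAt (fun x : EuclideanSpace ℝ (Fin n) => x - x₀)
      (ContinuousLinearMap.id ℝ _) x₁ := (hasFDerivAt_id x₁).sub_const x₀
  have hinner := (hid.inner ℝ hid).add_const (δ ^ 2)
  have hL : ((fderivInnerCLM ℝ (x₁ - x₀, x₁ - x₀)).comp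
      ((ContinuousLinearMap.id ℝ _).prod (ContinuousLinearMap.id ℝ _)))
      = (2 : ℝ) • innerSL ℝ v := by
    ext y
    simp only [ContinuousLinearMap.coe_comp', Function.comp_apply,
      ContinuousLinearMap.prod_apply, ContinuousLinearMap.coe_id', id_eq,
      fderivInnerCLM_apply, ContinuousLinearMap.smul_apply, innerSL_apply_apply, smul_eq_mul]
    rw [real_inner_comm]
    ring
  rw [hL] at hinner
  have hq1 : HasFDerivAt q ((2 : ℝ) • innerSL ℝ v) x₁ := hinner
  have hsq : HasFDerivAt (fun x => Real.sqrt (q x))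
      ((1 / (2 * Real.sqrt (q x₁))) • ((2 : ℝ) • innerSL ℝ v)) x₁ := hq1.sqrt (qpos x₁).ne'
  have hφ : HasFDerivAt (fun x : EuclideanSpace ℝ (Fin n) =>
      c * (r + δ) - c * Real.sqrt (q x))
      (-(c • ((1 / (2 * Real.sqrt (q x₁))) • ((2 : ℝ) • innerSL ℝ v)))) x₁ :=
    (hsq.const_mul c).const_sub _
  have hnorm : ‖gradient (fun x : EuclideanSpace ℝ (Fin n) =>
      c * (r + δ) - c * Real.sqrt (q x)) x₁‖
      = ‖(-(c • ((1 / (2 * Real.sqrt (q x₁))) • ((2 : ℝ) • innerSL ℝ v))))‖ :=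
    aux_grad_norm_eq hφ
  rw [hnorm]
  have hs : 0 < Real.sqrt (q x₁) := Real.sqrt_pos.2 (qpos x₁)
  have hvq : ‖v‖ ^ 2 ≤ q x₁ := by
    have : q x₁ = ‖v‖ ^ 2 + δ ^ 2 := by
      rw [hq]; simp only; rw [← hv, real_inner_self_eq_norm_sq]
    rw [this]; nlinarith [sq_nonneg δ]
  have hvs : ‖v‖ ≤ Real.sqrt (q x₁) :=
    calc ‖v‖ = Real.sqrt (‖v‖ ^ 2) := (Real.sqrt_sq (norm_nonneg v)).symm
    _ ≤ _ := Real.sqrt_le_sqrt hvq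
  have hD : -(c • (1 / (2 * Real.sqrt (q x₁))) • (2:ℝ) • (innerSL ℝ) v)
      = innerSL ℝ ((-(c * (1 / (2 * Real.sqrt (q x₁))) * 2)) • v) := by
    ext y
    simp only [ContinuousLinearMap.neg_apply, ContinuousLinearMap.smul_apply,
      innerSL_apply_apply, smul_eq_mul, real_inner_smul_left]
    ring
  rw [hD, innerSL_apply_norm, norm_smul, Real.norm_eq_abs]
  have habs : |(-(c * (1 / (2 * Real.sqrt (q x₁))) * 2))| = c / Real.sqrt (q x₁) := by
    rw [abs_neg, abs_of_pos (by positivity)]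
    field_simp
  rw [habs, div_mul_eq_mul_div, div_le_iff₀ hs]
  calc c * ‖v‖ ≤ c * Real.sqrt (q x₁) := mul_le_mul_of_nonneg_left hvs hc.le
  _ = _ := rfl

/-- Every solution of the limit problem is bounded below by
`Λ·dist(·, ∂Ω)`; in particular it is positive in `Ω` and its sup is at least
`Λ · sup_{x∈Ω} dist(x, ∂Ω)`. -/
theorem limit_solutions_lower_bound {n : ℕ} (Ω : Set (EuclideanSpace ℝ (Fin n)))
    (hΩo : IsOpen Ω) (hΩb : Bornology.IsBounded Ω)
    (Λ : ℝ) (hΛ : 0 < Λ)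
    (u : EuclideanSpace ℝ (Fin n) → ℝ)
    (hu_cont : ContinuousOn u (closure Ω))
    (hu_sol : IsInftySol Ω Λ u)
    (hu_bdry : ∀ x ∈ frontier Ω, u x = 0) :
    (∀ x ∈ Ω, Λ * infDist x (frontier Ω) ≤ u x) ∧
    (∀ x ∈ Ω, 0 < u x) ∧
    Λ * sSup ((fun x => infDist x (frontier Ω)) '' Ω) ≤ sSup (u '' closure Ω) := by
  classical
  by_cases hne : Ω.Nonempty
  swap
  · rw [not_nonempty_iff_eq_empty] at hne
    subst hne
    refine ⟨fun x hx => absurd hx (by simp), fun x hx => absurd hx (by simp), ?_⟩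
    simp [Real.sSup_empty]
  have hsuper := hu_sol.1
  have hK : IsCompact (closure Ω) :=
    Metric.isCompact_of_isClosed_isBounded isClosed_closure hΩb.closure
  obtain ⟨z, hz, hminz⟩ := hK.exists_isMinOn hne.closure hu_cont
  -- the minimum of u on the closure is attained on the frontier
  have hzΩ : z ∉ Ω := by
    intro hzo
    have hloc : IsLocalMinOn (fun x => u x - (fun _ => (0:ℝ)) x) Ω z := by
      have : ∀ᶠ y in 𝓝[Ω] z, u z - 0 ≤ u y - 0 := by
        filter_upwards [eventually_mem_nhdsWithin] with y hy
        have := isMinOn_iff.1 hminz y (subset_closure hy)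
        linarith
      exact this
    have h := (hsuper z hzo (fun _ => (0:ℝ)) contDiff_const hloc).1
    rw [aux_grad_norm_eq (hasFDerivAt_const (0:ℝ) z)] at h
    simp only [norm_zero, zero_sub] at h
    nlinarith [Real.exp_pos (u z), hΛ]
  have hzf : z ∈ frontier Ω := by rw [hΩo.frontier_eq]; exact ⟨hz, hzΩ⟩
  have hu0 : ∀ y ∈ closure Ω, 0 ≤ u y := fun y hy => by
    rw [← hu_bdry z hzf]; exact isMinOn_iff.1 hminz y hy
  -- main lower bound
  have key : ∀ x₀ ∈ Ω, Λ * infDist x₀ (frontier Ω) ≤ u x₀ := by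
    intro x₀ hx₀
    set r := infDist x₀ (frontier Ω) with hrdef
    have hux₀ : 0 ≤ u x₀ := hu0 x₀ (subset_closure hx₀)
    rcases le_or_gt r 0 with h0 | hr
    · nlinarith
    by_contra hlt
    push_neg at hlt
    -- the ball of radius r is contained in Ω
    have ball_sub : ball x₀ r ⊆ Ω := by
      intro y hy
      by_contra hyΩ
      obtain ⟨w, hwseg, hwf⟩ := aux_frontier_inter (convex_segment x₀ y).isPreconnected
        ⟨x₀, left_mem_segment ℝ x₀ y, hx₀⟩ ⟨y, right_mem_segment ℝ x₀ y, hyΩ⟩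
      have hdist : dist w x₀ ≤ dist y x₀ := by
        obtain ⟨p, b, hp, hb, hab, rfl⟩ := hwseg
        rw [show b = 1 - p by linarith]
        exact dist_smul_add_one_sub_smul_le ⟨hp, by linarith⟩
      have h1 : r ≤ dist x₀ w := infDist_le_dist_of_mem hwf
      rw [mem_ball] at hy
      rw [dist_comm] at h1
      linarith
    have cb_sub : closedBall x₀ r ⊆ closure Ω := by
      rw [← closure_ball x₀ hr.ne']
      exact closure_mono ball_sub
    -- the slope constant
    set c := (u x₀ / r + Λ) / 2 with hc
    have hur : u x₀ / r < Λ := (div_lt_iff₀ hr).2 (by linarith)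
    have hur0 : 0 ≤ u x₀ / r := div_nonneg hux₀ hr.le
    have hcpos : 0 < c := by rw [hc]; linarith
    have hcΛ : c < Λ := by rw [hc]; linarith
    have hcr : u x₀ < c * r := by
      have h1 : u x₀ / r < c := by rw [hc]; linarith
      calc u x₀ = u x₀ / r * r := by field_simp
      _ < c * r := mul_lt_mul_of_pos_right h1 hr
    set a := c * r - u x₀ with ha
    have hapos : 0 < a := by rw [ha]; linarith
    set δ := a / (2 * c) with hδdef
    have hδ : 0 < δ := by positivity
    have hcδ : c * δ = a / 2 := by rw [hδdef]; field_simp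
    -- the smoothed cone test function
    set q : EuclideanSpace ℝ (Fin n) → ℝ :=
      fun x => (inner ℝ (x - x₀) (x - x₀) : ℝ) + δ ^ 2 with hq
    have hqnorm : ∀ x, q x = ‖x - x₀‖ ^ 2 + δ ^ 2 := fun x => by
      rw [hq]; simp only; rw [real_inner_self_eq_norm_sq]
    have hqpos : ∀ x, 0 < q x := fun x => by
      rw [hqnorm x]; positivity
    set φ : EuclideanSpace ℝ (Fin n) → ℝ :=
      fun x => c * (r + δ) - c * Real.sqrt (q x) with hφ
    have hφC2 : ContDiff ℝ 2 φ := by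
      apply ContDiff.sub contDiff_const
      apply ContDiff.mul contDiff_const
      apply ContDiff.sqrt _ (fun x => (hqpos x).ne')
      exact ((contDiff_id.sub contDiff_const).inner ℝ
        (contDiff_id.sub contDiff_const)).add contDiff_const
    -- value at the center
    have hφx₀ : φ x₀ = c * r := by
      rw [hφ]; simp only
      rw [hqnorm x₀, sub_self, norm_zero]
      rw [show (0:ℝ) ^ 2 + δ ^ 2 = δ ^ 2 by ring, Real.sqrt_sq hδ.le]
      ring
    -- minimize u - φ on the closed ball
    obtain ⟨x₁, hx₁cb, hmin⟩ := (isCompact_closedBall x₀ r).exists_isMinOn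
      ⟨x₀, mem_closedBall_self hr.le⟩
      ((hu_cont.mono cb_sub).sub (hφC2.continuous.continuousOn))
    have hminval : u x₁ - φ x₁ ≤ -a := by
      have := isMinOn_iff.1 hmin x₀ (mem_closedBall_self hr.le)
      simp only [Pi.sub_apply] at this
      rw [hφx₀] at this
      rw [ha] at *
      linarith
    -- the minimizer is interior
    have hx₁ball : x₁ ∈ ball x₀ r := by
      by_contra hb
      have hdist : dist x₁ x₀ = r :=
        le_antisymm (mem_closedBall.1 hx₁cb) (not_lt.1 (by simpa [mem_ball] using hb))
      have hrs : r ≤ Real.sqrt (r ^ 2 + δ ^ 2) := by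
        calc r = Real.sqrt (r ^ 2) := (Real.sqrt_sq hr.le).symm
        _ ≤ _ := Real.sqrt_le_sqrt (by nlinarith)
      have hφx₁ : φ x₁ ≤ c * δ := by
        rw [hφ]; simp only
        rw [hqnorm x₁, ← dist_eq_norm, hdist]
        nlinarith
      have hu1 : 0 ≤ u x₁ := hu0 x₁ (cb_sub hx₁cb)
      have : -(c * δ) ≤ u x₁ - φ x₁ := by linarith
      rw [hcδ] at this
      linarith
    have hx₁Ω : x₁ ∈ Ω := ball_sub hx₁ball
    have hloc : IsLocalMinOn (fun x => u x - φ x) Ω x₁ := by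
      have hev : ∀ᶠ y in 𝓝 x₁, u x₁ - φ x₁ ≤ u y - φ y := by
        filter_upwards [isOpen_ball.mem_nhds hx₁ball] with y hy
        exact isMinOn_iff.1 hmin y (ball_subset_closedBall hy)
      exact hev.filter_mono nhdsWithin_le_nhds
    have h1 := (hsuper x₁ hx₁Ω φ hφC2 hloc).1
    have hgrad : ‖gradient φ x₁‖ ≤ c := aux_grad_bound x₀ x₁ c r δ hδ hcpos
    have hu1 : 0 ≤ u x₁ := hu0 x₁ (cb_sub (ball_subset_closedBall hx₁ball))
    have hexp : 1 ≤ Real.exp (u x₁) := Real.one_le_exp hu1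
    nlinarith [mul_le_mul_of_nonneg_left hexp hΛ.le]
  refine ⟨key, ?_, ?_⟩
  · intro x hx
    have hxf : x ∉ frontier Ω := by
      rw [hΩo.frontier_eq]; exact fun h => h.2 hx
    have hpos : 0 < infDist x (frontier Ω) :=
      (isClosed_frontier.notMem_iff_infDist_pos ⟨z, hzf⟩).1 hxf
    have := key x hx
    nlinarith
  · set S := sSup (u '' closure Ω) with hS
    have himg : IsCompact (u '' closure Ω) := hK.image_of_continuousOn hu_cont
    have hbdd : BddAbove (u '' closure Ω) := himg.bddAbove
    have hle : ∀ d ∈ (fun x => infDist x (frontier Ω)) '' Ω, d ≤ S / Λ := by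
      rintro d ⟨x, hx, rfl⟩
      have h1 : Λ * infDist x (frontier Ω) ≤ u x := key x hx
      have h2 : u x ≤ S := le_csSup hbdd ⟨x, subset_closure hx, rfl⟩
      rw [le_div_iff₀ hΛ]
      linarith
    have h3 : sSup ((fun x => infDist x (frontier Ω)) '' Ω) ≤ S / Λ :=
      csSup_le (hne.image _) hle
    calc Λ * sSup ((fun x => infDist x (frontier Ω)) '' Ω) ≤ Λ * (S / Λ) :=
          mul_le_mul_of_nonneg_left h3 hΛ.le
    _ = S := by field_simp
end
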